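/- Let A be a right-symmetric algebra over a commutative ring K with multiplication μ₀(a,b) = a∘b, and let μ₁,…,μ_{k−1} : A × A → A be bilinear maps satisfying the deformation equations: d_rsym μ₁ = 0, and Σ_{i=1}^{l−1} μ_i ⋆ μ_{l−i} = −d_rsym μ_l for each l with 2 ≤ l ≤ k−1, where (ψ⋆φ)(a,b,c) = ψ(a,φ(b,c)) − ψ(φ(a,b),c) − ψ(a,φ(c,b)) + ψ(φ(a,c),b). Then the obstruction Obs_k = Σ_{l=1}^{k−1} μ_l ⋆ μ_{k−l} is a right-symmetric 3-cocycle: d_rsym(Obs_k) = 0. -/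
import Mathlib


open Finset

variable {K A : Type*} [CommRing K] [AddCommGroup A] [Module K A]

/-- The Gerstenhaber-type product for deformations of right-symmetric algebras:
`(ψ⋆φ)(a,b,c) = ψ(a,φ(b,c)) − ψ(φ(a,b),c) − ψ(a,φ(c,b)) + ψ(φ(a,c),b)`. -/
def rstar (ψ φ : A →ₗ[K] A →ₗ[K] A) (a b c : A) : A :=
  ψ a (φ b c) - ψ (φ a b) c - ψ a (φ c b) + ψ (φ a c) b

/-- The right-symmetric coboundary of a 2-cochain with regular coefficients. -/
def drsym2 (mul : A →ₗ[K] A →ₗ[K] A) (ψ : A → A → A) (a b c : A) : A :=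
  mul a (ψ b c) - mul a (ψ c b) - ψ (mul a b) c + ψ (mul a c) b
    + ψ a (mul b c - mul c b) - mul (ψ a b) c + mul (ψ a c) b

/-- The right-symmetric coboundary of a 3-cochain (alternating in its last two
arguments) with regular coefficients. -/
def drsym3 (mul : A →ₗ[K] A →ₗ[K] A) (χ : A → A → A → A) (a₀ a₁ a₂ a₃ : A) : A :=
  mul a₀ (χ a₁ a₂ a₃) - χ (mul a₀ a₁) a₂ a₃ + mul (χ a₀ a₂ a₃) a₁
    - mul a₀ (χ a₂ a₁ a₃) + χ (mul a₀ a₂) a₁ a₃ - mul (χ a₀ a₁ a₃) a₂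
    + mul a₀ (χ a₃ a₁ a₂) - χ (mul a₀ a₃) a₁ a₂ + mul (χ a₀ a₁ a₂) a₃
    + χ a₀ (mul a₁ a₂ - mul a₂ a₁) a₃
    + χ a₀ a₂ (mul a₁ a₃ - mul a₃ a₁)
    - χ a₀ a₁ (mul a₂ a₃ - mul a₃ a₂)

/-- auxiliary: truncated-convolution product on `ℕ → A`. -/
def rconv (ν : ℕ → A →ₗ[K] A →ₗ[K] A) : (ℕ → A) →ₗ[K] (ℕ → A) →ₗ[K] (ℕ → A) :=
  LinearMap.mk₂ K
    (fun x y n => ∑ p ∈ range (n + 1), ∑ q ∈ range (n - p + 1), ν p (x q) (y (n - p - q)))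
    (fun x x' y => by
      funext n
      simp [Pi.add_apply, map_add, LinearMap.add_apply, Finset.sum_add_distrib])
    (fun c x y => by
      funext n
      simp [Pi.smul_apply, map_smul, LinearMap.smul_apply, Finset.smul_sum])
    (fun x y y' => by
      funext n
      simp [Pi.add_apply, map_add, Finset.sum_add_distrib])
    (fun c x y => by
      funext n
      simp [Pi.smul_apply, map_smul, Finset.smul_sum])

def rdel (a : A) : ℕ → A := fun n => if n = 0 then a else 0

lemma rconv_apply (ν : ℕ → A →ₗ[K] A →ₗ[K] A) (x y : ℕ → A) (n : ℕ) :
    rconv ν x y n = ∑ p ∈ range (n + 1), ∑ q ∈ range (n - p + 1), ν p (x q) (y (n - p - q)) :=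
  rfl

lemma rconv_dl (ν : ℕ → A →ₗ[K] A →ₗ[K] A) (a : A) (y : ℕ → A) (n : ℕ) :
    rconv ν (rdel a) y n = ∑ p ∈ range (n + 1), ν p a (y (n - p)) := by
  rw [rconv_apply]
  refine Finset.sum_congr rfl fun p hp => ?_
  rw [Finset.sum_eq_single 0]
  · simp [rdel]
  · intro q hq hq0
    simp [rdel, hq0]
  · intro h
    simp at h

lemma rconv_dr (ν : ℕ → A →ₗ[K] A →ₗ[K] A) (x : ℕ → A) (b : A) (n : ℕ) :
    rconv ν x (rdel b) n = ∑ p ∈ range (n + 1), ν p (x (n - p)) b := by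
  rw [rconv_apply]
  refine Finset.sum_congr rfl fun p hp => ?_
  simp only [mem_range] at hp
  rw [Finset.sum_eq_single (n - p)]
  · simp [rdel]
  · intro q hq hq0
    simp only [mem_range] at hq
    have : n - p - q ≠ 0 := by omega
    simp [rdel, this]
  · intro h
    simp at h

lemma rconv_dd (ν : ℕ → A →ₗ[K] A →ₗ[K] A) (a b : A) (n : ℕ) :
    rconv ν (rdel a) (rdel b) n = ν n a b := by
  rw [rconv_dl]
  rw [Finset.sum_eq_single n]
  · simp [rdel]
  · intro p hp hp0
    simp only [mem_range] at hp
    have : n - p ≠ 0 := by omega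
    simp [rdel, this]
  · intro h
    simp at h

/-- triangle sum swap -/
lemma tri_comm {M : Type*} [AddCommMonoid M] (F : ℕ → ℕ → M) (n : ℕ) :
    ∑ p ∈ range (n + 1), ∑ q ∈ range (n - p + 1), F p q
      = ∑ q ∈ range (n + 1), ∑ p ∈ range (n - q + 1), F p q :=
  Finset.sum_comm' (by intro p q; simp only [mem_range]; omega)

/-- reflect the inner index then swap -/
lemma tri_reflect_comm {M : Type*} [AddCommMonoid M] (F : ℕ → ℕ → M) (n : ℕ) :
    ∑ p ∈ range (n + 1), ∑ q ∈ range (n - p + 1), F p q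
      = ∑ q ∈ range (n + 1), ∑ p ∈ range (n - q + 1), F p (n - q - p) := by
  have h1 : ∀ p, ∑ q ∈ range (n - p + 1), F p q
      = ∑ q ∈ range (n - p + 1), F p (n - p - q) := by
    intro p
    rw [← Finset.sum_range_reflect]
    refine Finset.sum_congr rfl fun q hq => ?_
    simp only [mem_range] at hq
    congr 1 <;> omega
  calc ∑ p ∈ range (n + 1), ∑ q ∈ range (n - p + 1), F p q
      = ∑ p ∈ range (n + 1), ∑ q ∈ range (n - p + 1), F p (n - p - q) := by
        exact Finset.sum_congr rfl fun p _ => h1 p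
    _ = ∑ q ∈ range (n + 1), ∑ p ∈ range (n - q + 1), F p (n - p - q) := tri_comm _ n
    _ = ∑ q ∈ range (n + 1), ∑ p ∈ range (n - q + 1), F p (n - q - p) := by
        refine Finset.sum_congr rfl fun q _ => Finset.sum_congr rfl fun p _ => ?_
        congr 1 <;> omega
lemma tri_master {M : Type*} [AddCommMonoid M] (H : ℕ → ℕ → ℕ → M) (n : ℕ) :
    ∑ p ∈ range (n + 1), ∑ q ∈ range (n - p + 1), H p q (n - p - q)
      = ∑ r ∈ range (n + 1), ∑ p ∈ range (n - r + 1), H p (n - r - p) r := by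
  rw [tri_reflect_comm (fun p q => H p q (n - p - q)) n]
  refine Finset.sum_congr rfl fun r hr => Finset.sum_congr rfl fun p hp => ?_
  simp only [mem_range] at hr hp
  have h1 : n - p - (n - r - p) = r := by omega
  rw [h1]

lemma tri_master' {M : Type*} [AddCommMonoid M] (H : ℕ → ℕ → ℕ → M) (n : ℕ) :
    ∑ p ∈ range (n + 1), ∑ q ∈ range (n - p + 1), H p (n - p - q) q
      = ∑ r ∈ range (n + 1), ∑ p ∈ range (n - r + 1), H p (n - r - p) r := by
  rw [tri_comm (fun p q => H p (n - p - q) q) n]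
  refine Finset.sum_congr rfl fun r hr => Finset.sum_congr rfl fun p hp => ?_
  simp only [mem_range] at hr hp
  have h1 : n - p - r = n - r - p := by omega
  rw [h1]

def Cm (ν : ℕ → A →ₗ[K] A →ₗ[K] A) (m : ℕ) (x y z : A) : A :=
  ∑ i ∈ range (m + 1), rstar (ν i) (ν (m - i)) x y z

lemma R_xdd (ν : ℕ → A →ₗ[K] A →ₗ[K] A) (x : ℕ → A) (b c : A) (n : ℕ) :
    rstar (rconv ν) (rconv ν) x (rdel b) (rdel c) n
      = ∑ q ∈ range (n + 1), Cm ν (n - q) (x q) b c := by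
  have T1 : rconv ν x (rconv ν (rdel b) (rdel c)) n
      = ∑ r ∈ range (n + 1), ∑ p ∈ range (n - r + 1), ν p (x r) (ν (n - r - p) b c) := by
    calc rconv ν x (rconv ν (rdel b) (rdel c)) n
        = ∑ p ∈ range (n + 1), ∑ q ∈ range (n - p + 1), ν p (x q) (ν (n - p - q) b c) := by
          rw [rconv_apply]
          exact Finset.sum_congr rfl fun p _ => Finset.sum_congr rfl fun q _ => by
            rw [rconv_dd]
      _ = _ := tri_master' (fun p j r => ν p (x r) (ν j b c)) n
  have T2 : rconv ν (rconv ν x (rdel b)) (rdel c) n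
      = ∑ r ∈ range (n + 1), ∑ p ∈ range (n - r + 1), ν p (ν (n - r - p) (x r) b) c := by
    calc rconv ν (rconv ν x (rdel b)) (rdel c) n
        = ∑ p ∈ range (n + 1), ν p ((rconv ν x (rdel b)) (n - p)) c := rconv_dr ν _ c n
      _ = ∑ p ∈ range (n + 1), ∑ q ∈ range (n - p + 1), ν p (ν q (x (n - p - q)) b) c := by
          refine Finset.sum_congr rfl fun p _ => ?_
          rw [rconv_dr, map_sum, LinearMap.sum_apply]
      _ = _ := tri_master (fun p q r => ν p (ν q (x r) b) c) n
  have T3 : rconv ν x (rconv ν (rdel c) (rdel b)) n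
      = ∑ r ∈ range (n + 1), ∑ p ∈ range (n - r + 1), ν p (x r) (ν (n - r - p) c b) := by
    calc rconv ν x (rconv ν (rdel c) (rdel b)) n
        = ∑ p ∈ range (n + 1), ∑ q ∈ range (n - p + 1), ν p (x q) (ν (n - p - q) c b) := by
          rw [rconv_apply]
          exact Finset.sum_congr rfl fun p _ => Finset.sum_congr rfl fun q _ => by
            rw [rconv_dd]
      _ = _ := tri_master' (fun p j r => ν p (x r) (ν j c b)) n
  have T4 : rconv ν (rconv ν x (rdel c)) (rdel b) n
      = ∑ r ∈ range (n + 1), ∑ p ∈ range (n - r + 1), ν p (ν (n - r - p) (x r) c) b := by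
    calc rconv ν (rconv ν x (rdel c)) (rdel b) n
        = ∑ p ∈ range (n + 1), ν p ((rconv ν x (rdel c)) (n - p)) b := rconv_dr ν _ b n
      _ = ∑ p ∈ range (n + 1), ∑ q ∈ range (n - p + 1), ν p (ν q (x (n - p - q)) c) b := by
          refine Finset.sum_congr rfl fun p _ => ?_
          rw [rconv_dr, map_sum, LinearMap.sum_apply]
      _ = _ := tri_master (fun p q r => ν p (ν q (x r) c) b) n
  simp only [rstar, Pi.sub_apply, Pi.add_apply]
  rw [T1, T2, T3, T4]
  simp only [Cm, rstar, Finset.sum_sub_distrib, Finset.sum_add_distrib]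
lemma R_dyd (ν : ℕ → A →ₗ[K] A →ₗ[K] A) (a : A) (y : ℕ → A) (c : A) (n : ℕ) :
    rstar (rconv ν) (rconv ν) (rdel a) y (rdel c) n
      = ∑ q ∈ range (n + 1), Cm ν (n - q) a (y q) c := by
  have T1 : rconv ν (rdel a) (rconv ν y (rdel c)) n
      = ∑ r ∈ range (n + 1), ∑ p ∈ range (n - r + 1), ν p a (ν (n - r - p) (y r) c) := by
    calc rconv ν (rdel a) (rconv ν y (rdel c)) n
        = ∑ p ∈ range (n + 1), ν p a ((rconv ν y (rdel c)) (n - p)) := rconv_dl ν a _ n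
      _ = ∑ p ∈ range (n + 1), ∑ q ∈ range (n - p + 1), ν p a (ν q (y (n - p - q)) c) := by
          refine Finset.sum_congr rfl fun p _ => ?_
          rw [rconv_dr, map_sum]
      _ = _ := tri_master (fun p q r => ν p a (ν q (y r) c)) n
  have T2 : rconv ν (rconv ν (rdel a) y) (rdel c) n
      = ∑ r ∈ range (n + 1), ∑ p ∈ range (n - r + 1), ν p (ν (n - r - p) a (y r)) c := by
    calc rconv ν (rconv ν (rdel a) y) (rdel c) n
        = ∑ p ∈ range (n + 1), ν p ((rconv ν (rdel a) y) (n - p)) c := rconv_dr ν _ c n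
      _ = ∑ p ∈ range (n + 1), ∑ q ∈ range (n - p + 1), ν p (ν q a (y (n - p - q))) c := by
          refine Finset.sum_congr rfl fun p _ => ?_
          rw [rconv_dl, map_sum, LinearMap.sum_apply]
      _ = _ := tri_master (fun p q r => ν p (ν q a (y r)) c) n
  have T3 : rconv ν (rdel a) (rconv ν (rdel c) y) n
      = ∑ r ∈ range (n + 1), ∑ p ∈ range (n - r + 1), ν p a (ν (n - r - p) c (y r)) := by
    calc rconv ν (rdel a) (rconv ν (rdel c) y) n
        = ∑ p ∈ range (n + 1), ν p a ((rconv ν (rdel c) y) (n - p)) := rconv_dl ν a _ n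
      _ = ∑ p ∈ range (n + 1), ∑ q ∈ range (n - p + 1), ν p a (ν q c (y (n - p - q))) := by
          refine Finset.sum_congr rfl fun p _ => ?_
          rw [rconv_dl, map_sum]
      _ = _ := tri_master (fun p q r => ν p a (ν q c (y r))) n
  have T4 : rconv ν (rconv ν (rdel a) (rdel c)) y n
      = ∑ r ∈ range (n + 1), ∑ p ∈ range (n - r + 1), ν p (ν (n - r - p) a c) (y r) := by
    calc rconv ν (rconv ν (rdel a) (rdel c)) y n
        = ∑ p ∈ range (n + 1), ∑ q ∈ range (n - p + 1), ν p (ν q a c) (y (n - p - q)) := by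
          rw [rconv_apply]
          exact Finset.sum_congr rfl fun p _ => Finset.sum_congr rfl fun q _ => by
            rw [rconv_dd]
      _ = _ := tri_master (fun p q r => ν p (ν q a c) (y r)) n
  simp only [rstar, Pi.sub_apply, Pi.add_apply]
  rw [T1, T2, T3, T4]
  simp only [Cm, rstar, Finset.sum_sub_distrib, Finset.sum_add_distrib]

lemma R_ddz (ν : ℕ → A →ₗ[K] A →ₗ[K] A) (a b : A) (z : ℕ → A) (n : ℕ) :
    rstar (rconv ν) (rconv ν) (rdel a) (rdel b) z n
      = ∑ q ∈ range (n + 1), Cm ν (n - q) a b (z q) := by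
  have T1 : rconv ν (rdel a) (rconv ν (rdel b) z) n
      = ∑ r ∈ range (n + 1), ∑ p ∈ range (n - r + 1), ν p a (ν (n - r - p) b (z r)) := by
    calc rconv ν (rdel a) (rconv ν (rdel b) z) n
        = ∑ p ∈ range (n + 1), ν p a ((rconv ν (rdel b) z) (n - p)) := rconv_dl ν a _ n
      _ = ∑ p ∈ range (n + 1), ∑ q ∈ range (n - p + 1), ν p a (ν q b (z (n - p - q))) := by
          refine Finset.sum_congr rfl fun p _ => ?_
          rw [rconv_dl, map_sum]
      _ = _ := tri_master (fun p q r => ν p a (ν q b (z r))) n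
  have T2 : rconv ν (rconv ν (rdel a) (rdel b)) z n
      = ∑ r ∈ range (n + 1), ∑ p ∈ range (n - r + 1), ν p (ν (n - r - p) a b) (z r) := by
    calc rconv ν (rconv ν (rdel a) (rdel b)) z n
        = ∑ p ∈ range (n + 1), ∑ q ∈ range (n - p + 1), ν p (ν q a b) (z (n - p - q)) := by
          rw [rconv_apply]
          exact Finset.sum_congr rfl fun p _ => Finset.sum_congr rfl fun q _ => by
            rw [rconv_dd]
      _ = _ := tri_master (fun p q r => ν p (ν q a b) (z r)) n
  have T3 : rconv ν (rdel a) (rconv ν z (rdel b)) n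
      = ∑ r ∈ range (n + 1), ∑ p ∈ range (n - r + 1), ν p a (ν (n - r - p) (z r) b) := by
    calc rconv ν (rdel a) (rconv ν z (rdel b)) n
        = ∑ p ∈ range (n + 1), ν p a ((rconv ν z (rdel b)) (n - p)) := rconv_dl ν a _ n
      _ = ∑ p ∈ range (n + 1), ∑ q ∈ range (n - p + 1), ν p a (ν q (z (n - p - q)) b) := by
          refine Finset.sum_congr rfl fun p _ => ?_
          rw [rconv_dr, map_sum]
      _ = _ := tri_master (fun p q r => ν p a (ν q (z r) b)) n
  have T4 : rconv ν (rconv ν (rdel a) z) (rdel b) n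
      = ∑ r ∈ range (n + 1), ∑ p ∈ range (n - r + 1), ν p (ν (n - r - p) a (z r)) b := by
    calc rconv ν (rconv ν (rdel a) z) (rdel b) n
        = ∑ p ∈ range (n + 1), ν p ((rconv ν (rdel a) z) (n - p)) b := rconv_dr ν _ b n
      _ = ∑ p ∈ range (n + 1), ∑ q ∈ range (n - p + 1), ν p (ν q a (z (n - p - q))) b := by
          refine Finset.sum_congr rfl fun p _ => ?_
          rw [rconv_dl, map_sum, LinearMap.sum_apply]
      _ = _ := tri_master (fun p q r => ν p (ν q a (z r)) b) n
  simp only [rstar, Pi.sub_apply, Pi.add_apply]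
  rw [T1, T2, T3, T4]
  simp only [Cm, rstar, Finset.sum_sub_distrib, Finset.sum_add_distrib]


lemma drsym2_split (mul ψ : A →ₗ[K] A →ₗ[K] A) (a b c : A) :
    rstar mul ψ a b c + rstar ψ mul a b c = drsym2 mul (fun x y => ψ x y) a b c := by
  simp only [drsym2, rstar, map_sub]
  abel

lemma rstar_zero_left (φ : A →ₗ[K] A →ₗ[K] A) (a b c : A) : rstar 0 φ a b c = 0 := by
  simp [rstar]

lemma rstar_zero_right (ψ : A →ₗ[K] A →ₗ[K] A) (a b c : A) : rstar ψ 0 a b c = 0 := by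
  simp [rstar]

lemma Cm_zero1 (ν : ℕ → A →ₗ[K] A →ₗ[K] A) (m : ℕ) (b c : A) : Cm ν m 0 b c = 0 := by
  simp [Cm, rstar]

lemma R_ddd (ν : ℕ → A →ₗ[K] A →ₗ[K] A) (a b c : A) (n : ℕ) :
    rstar (rconv ν) (rconv ν) (rdel a) (rdel b) (rdel c) n = Cm ν n a b c := by
  rw [R_xdd]
  rw [Finset.sum_eq_single 0 (fun q _ hq => by simp [rdel, hq, Cm_zero1])
    (fun h => absurd (mem_range.2 (by omega)) h)]
  simp [rdel]

theorem key (M : A →ₗ[K] A →ₗ[K] A) (a₀ a₁ a₂ a₃ : A) :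
    drsym3 M (fun x y z => rstar M M x y z) a₀ a₁ a₂ a₃ = 0 := by
  simp only [drsym3, rstar, map_sub, map_add, LinearMap.sub_apply, LinearMap.add_apply]
  abel

/-- If `μ₁,…,μ_{k−1}` satisfy the deformation equations of a right-symmetric
algebra `(A, mul)`, then the obstruction `Obs_k = Σ_{l=1}^{k−1} μ_l ⋆ μ_{k−l}`
is a right-symmetric 3-cocycle: `d_rsym(Obs_k) = 0`. -/
theorem obstruction_is_cocycle
    (mul : A →ₗ[K] A →ₗ[K] A)
    (hrs : ∀ a b c : A,
      mul (mul a b) c - mul a (mul b c) = mul (mul a c) b - mul a (mul c b))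
    (k : ℕ) (hk : 2 ≤ k)
    (μ : ℕ → A →ₗ[K] A →ₗ[K] A)
    (h1 : ∀ a b c : A, drsym2 mul (fun x y => μ 1 x y) a b c = 0)
    (hl : ∀ l, 2 ≤ l → l ≤ k - 1 →
      ∀ a b c : A,
        ∑ i ∈ Finset.Ico 1 l, rstar (μ i) (μ (l - i)) a b c
          = - drsym2 mul (fun x y => μ l x y) a b c) :
    ∀ a₀ a₁ a₂ a₃ : A,
      drsym3 mul
        (fun x y z => ∑ l ∈ Finset.Ico 1 k, rstar (μ l) (μ (k - l)) x y z)
        a₀ a₁ a₂ a₃ = 0 := by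
  intro a₀ a₁ a₂ a₃
  -- the truncated coefficient system
  set ν : ℕ → A →ₗ[K] A →ₗ[K] A :=
    fun l => if l = 0 then mul else if l < k then μ l else 0 with hν
  have hν0 : ν 0 = mul := by simp [hν]
  have hνi : ∀ i, 1 ≤ i → i < k → ν i = μ i := by
    intro i h1' h2
    simp only [hν]
    rw [if_neg (by omega), if_pos h2]
  have hνk : ν k = 0 := by
    simp only [hν]
    rw [if_neg (by omega), if_neg (by omega)]
  -- vanishing of coefficients below k
  have hC0 : ∀ m, m < k → ∀ x y z : A, Cm ν m x y z = 0 := by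
    intro m hm x y z
    match m, hm with
    | 0, _ =>
      have h0 : Cm ν 0 x y z = rstar mul mul x y z := by
        simp [Cm, Finset.sum_range_one, hν0]
      rw [h0]
      have h2 : rstar mul mul x y z
          = (mul (mul x z) y - mul x (mul z y)) - (mul (mul x y) z - mul x (mul y z)) := by
        simp only [rstar]; abel
      rw [h2, ← hrs x y z, sub_self]
    | 1, hm =>
      have h0 : Cm ν 1 x y z = rstar mul (μ 1) x y z + rstar (μ 1) mul x y z := by
        simp only [Cm]
        rw [Finset.sum_range_succ, Finset.sum_range_one]
        rw [show (1:ℕ) - 0 = 1 from rfl, show (1:ℕ) - 1 = 0 from rfl, hν0,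
          hνi 1 le_rfl (by omega)]
      rw [h0, drsym2_split, h1]
    | (m+2), hm =>
      have h0 : Cm ν (m+2) x y z
          = (∑ i ∈ range (m+1), rstar (ν (i+1)) (ν (m+2-(i+1))) x y z
              + rstar (ν 0) (ν (m+2)) x y z)
            + rstar (ν (m+2)) (ν 0) x y z := by
        simp only [Cm]
        rw [Finset.sum_range_succ, Finset.sum_range_succ']
        simp only [Nat.sub_self, Nat.sub_zero]
      rw [h0, hν0, hνi (m+2) (by omega) hm]
      have h2 : ∑ i ∈ range (m+1), rstar (ν (i+1)) (ν (m+2-(i+1))) x y z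
          = ∑ i ∈ Finset.Ico 1 (m+2), rstar (μ i) (μ (m+2-i)) x y z := by
        rw [Finset.sum_Ico_eq_sum_range]
        refine Finset.sum_congr rfl fun i hi => ?_
        simp only [mem_range] at hi
        rw [show (1:ℕ) + i = i + 1 from by omega,
          hνi (i+1) (by omega) (by omega), hνi (m+2-(i+1)) (by omega) (by omega)]
      rw [h2, hl (m+2) (by omega) (by omega) x y z]
      have h3 : rstar mul (μ (m+2)) x y z + rstar (μ (m+2)) mul x y z
          = drsym2 mul (fun a b => μ (m+2) a b) x y z := drsym2_split mul (μ (m+2)) x y z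
      calc -drsym2 mul (fun a b => μ (m+2) a b) x y z + rstar mul (μ (m+2)) x y z
            + rstar (μ (m+2)) mul x y z
          = -drsym2 mul (fun a b => μ (m+2) a b) x y z
              + (rstar mul (μ (m+2)) x y z + rstar (μ (m+2)) mul x y z) := by abel
        _ = 0 := by rw [h3]; abel
  -- the top coefficient is the obstruction
  have hCk : ∀ x y z : A, Cm ν k x y z
      = ∑ l ∈ Finset.Ico 1 k, rstar (μ l) (μ (k - l)) x y z := by
    intro x y z
    obtain ⟨k', rfl⟩ : ∃ k', k = k' + 2 := ⟨k - 2, by omega⟩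
    have h0 : Cm ν (k'+2) x y z
        = (∑ i ∈ range (k'+1), rstar (ν (i+1)) (ν (k'+2-(i+1))) x y z
            + rstar (ν 0) (ν (k'+2)) x y z)
          + rstar (ν (k'+2)) (ν 0) x y z := by
      simp only [Cm]
      rw [Finset.sum_range_succ, Finset.sum_range_succ']
      simp only [Nat.sub_self, Nat.sub_zero]
    rw [h0, hνk, rstar_zero_right, rstar_zero_left, add_zero, add_zero]
    rw [Finset.sum_Ico_eq_sum_range]
    refine Finset.sum_congr rfl fun i hi => ?_
    simp only [mem_range] at hi
    rw [show (1:ℕ) + i = i + 1 from by omega,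
      hνi (i+1) (by omega) (by omega), hνi (k'+2-(i+1)) (by omega) (by omega)]
  -- evaluation lemmas at coefficient k
  have E1 : ∀ a b c d : A,
      rconv ν (rdel a) (rstar (rconv ν) (rconv ν) (rdel b) (rdel c) (rdel d)) k
        = mul a (∑ l ∈ Finset.Ico 1 k, rstar (μ l) (μ (k - l)) b c d) := by
    intro a b c d
    rw [rconv_dl]
    calc ∑ p ∈ range (k+1), ν p a ((rstar (rconv ν) (rconv ν) (rdel b) (rdel c) (rdel d)) (k - p))
        = ∑ p ∈ range (k+1), ν p a (Cm ν (k-p) b c d) :=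
          Finset.sum_congr rfl fun p _ => by rw [R_ddd]
      _ = ν 0 a (Cm ν k b c d) :=
          Finset.sum_eq_single 0
            (fun p hp hp0 => by
              simp only [mem_range] at hp
              rw [hC0 (k-p) (by omega), map_zero])
            (fun h => absurd (mem_range.2 (by omega)) h)
      _ = _ := by rw [hν0, hCk]
  have E2 : ∀ a b c d : A,
      rstar (rconv ν) (rconv ν) (rconv ν (rdel a) (rdel b)) (rdel c) (rdel d) k
        = ∑ l ∈ Finset.Ico 1 k, rstar (μ l) (μ (k - l)) (mul a b) c d := by
    intro a b c d
    rw [R_xdd]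
    calc ∑ q ∈ range (k+1), Cm ν (k - q) ((rconv ν (rdel a) (rdel b)) q) c d
        = ∑ q ∈ range (k+1), Cm ν (k - q) (ν q a b) c d :=
          Finset.sum_congr rfl fun q _ => by rw [rconv_dd]
      _ = Cm ν k (ν 0 a b) c d :=
          Finset.sum_eq_single 0
            (fun q hq hq0 => by
              simp only [mem_range] at hq
              exact hC0 (k-q) (by omega) _ _ _)
            (fun h => absurd (mem_range.2 (by omega)) h)
      _ = _ := by rw [hν0, hCk]
  have E3 : ∀ a b c d : A,
      rconv ν (rstar (rconv ν) (rconv ν) (rdel a) (rdel b) (rdel c)) (rdel d) k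
        = mul (∑ l ∈ Finset.Ico 1 k, rstar (μ l) (μ (k - l)) a b c) d := by
    intro a b c d
    rw [rconv_dr]
    calc ∑ p ∈ range (k+1), ν p ((rstar (rconv ν) (rconv ν) (rdel a) (rdel b) (rdel c)) (k - p)) d
        = ∑ p ∈ range (k+1), ν p (Cm ν (k-p) a b c) d :=
          Finset.sum_congr rfl fun p _ => by rw [R_ddd]
      _ = ν 0 (Cm ν k a b c) d :=
          Finset.sum_eq_single 0
            (fun p hp hp0 => by
              simp only [mem_range] at hp
              rw [hC0 (k-p) (by omega), map_zero, LinearMap.zero_apply])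
            (fun h => absurd (mem_range.2 (by omega)) h)
      _ = _ := by rw [hν0, hCk]
  have E10 : ∀ a b c d : A,
      rstar (rconv ν) (rconv ν) (rdel a)
          (rconv ν (rdel b) (rdel c) - rconv ν (rdel c) (rdel b)) (rdel d) k
        = ∑ l ∈ Finset.Ico 1 k, rstar (μ l) (μ (k - l)) a (mul b c - mul c b) d := by
    intro a b c d
    rw [R_dyd]
    calc ∑ q ∈ range (k+1),
          Cm ν (k - q) a ((rconv ν (rdel b) (rdel c) - rconv ν (rdel c) (rdel b)) q) d
        = ∑ q ∈ range (k+1), Cm ν (k - q) a (ν q b c - ν q c b) d :=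
          Finset.sum_congr rfl fun q _ => by rw [Pi.sub_apply, rconv_dd, rconv_dd]
      _ = Cm ν k a (ν 0 b c - ν 0 c b) d :=
          Finset.sum_eq_single 0
            (fun q hq hq0 => by
              simp only [mem_range] at hq
              exact hC0 (k-q) (by omega) _ _ _)
            (fun h => absurd (mem_range.2 (by omega)) h)
      _ = _ := by rw [hν0, hCk]
  have E11 : ∀ a b c d : A,
      rstar (rconv ν) (rconv ν) (rdel a) (rdel b)
          (rconv ν (rdel c) (rdel d) - rconv ν (rdel d) (rdel c)) k
        = ∑ l ∈ Finset.Ico 1 k, rstar (μ l) (μ (k - l)) a b (mul c d - mul d c) := by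
    intro a b c d
    rw [R_ddz]
    calc ∑ q ∈ range (k+1),
          Cm ν (k - q) a b ((rconv ν (rdel c) (rdel d) - rconv ν (rdel d) (rdel c)) q)
        = ∑ q ∈ range (k+1), Cm ν (k - q) a b (ν q c d - ν q d c) :=
          Finset.sum_congr rfl fun q _ => by rw [Pi.sub_apply, rconv_dd, rconv_dd]
      _ = Cm ν k a b (ν 0 c d - ν 0 d c) :=
          Finset.sum_eq_single 0
            (fun q hq hq0 => by
              simp only [mem_range] at hq
              exact hC0 (k-q) (by omega) _ _ _)
            (fun h => absurd (mem_range.2 (by omega)) h)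
      _ = _ := by rw [hν0, hCk]
  -- apply the universal identity on `ℕ → A` and read off the `k`-th coefficient
  have hkey := key (rconv ν) (rdel a₀) (rdel a₁) (rdel a₂) (rdel a₃)
  have hk2 := congrFun hkey k
  simp only [drsym3, Pi.sub_apply, Pi.add_apply, Pi.zero_apply] at hk2
  rw [E1 a₀ a₁ a₂ a₃, E2 a₀ a₁ a₂ a₃, E3 a₀ a₂ a₃ a₁, E1 a₀ a₂ a₁ a₃, E2 a₀ a₂ a₁ a₃,
    E3 a₀ a₁ a₃ a₂, E1 a₀ a₃ a₁ a₂, E2 a₀ a₃ a₁ a₂, E3 a₀ a₁ a₂ a₃,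
    E10 a₀ a₁ a₂ a₃, E11 a₀ a₂ a₁ a₃, E11 a₀ a₁ a₂ a₃] at hk2
  simp only [drsym3]
  exact hk2
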